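/- Let p ≥ 3 be a prime and let S_{p-1} denote the point stabilizer of the p-th element in the symmetric group S_p. Then there do not exist subgroups N and R of S_p with S_{p-1} ≤ N ≤ R ≤ S_p, N normal in R, and R/N cyclic of order p. -/

import Mathlib

/-- There are subgroups `U ≤ N ≤ R ≤ V` with `N` normal in `R` and `R/N` cyclic of order `p`. -/
def HasCyclicStep {V : Type*} [Group V] (U : Subgroup V) (p : ℕ) : Prop :=
  ∃ N R : Subgroup V, U ≤ N ∧ N ≤ R ∧ ∃ hn : (N.subgroupOf R).Normal,
    letI := hn
    IsCyclic (↥R ⧸ N.subgroupOf R) ∧ Nat.card (↥R ⧸ N.subgroupOf R) = p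

theorem symmetric_no_cyclic_step (p : ℕ) (hp : p.Prime) (hp3 : 3 ≤ p) :
    ¬ HasCyclicStep
      (MulAction.stabilizer (Equiv.Perm (Fin p)) (⟨p - 1, by omega⟩ : Fin p)) p := by
  rintro ⟨N, R, hUN, hNR, hn, -, hcard⟩
  set a : Fin p := ⟨p - 1, by omega⟩ with ha
  set stab := MulAction.stabilizer (Equiv.Perm (Fin p)) a with hstab
  have hp0 : 0 < p := by omega
  -- cardinality of the whole group
  have hG : Nat.card (Equiv.Perm (Fin p)) = p.factorial := by
    simp [Nat.card_eq_fintype_card, Fintype.card_perm]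
  have hfac : p * (p - 1).factorial = p.factorial := by
    conv_rhs => rw [show p = (p - 1) + 1 by omega]
    rw [Nat.factorial_succ]
    congr 1
    omega
  -- orbit of a is everything
  have horb : MulAction.orbit (Equiv.Perm (Fin p)) a = Set.univ := by
    ext y
    simp only [Set.mem_univ, iff_true]
    exact ⟨Equiv.swap a y, Equiv.swap_apply_left a y⟩
  -- cardinality of the stabilizer
  have hstabcard : Nat.card stab = (p - 1).factorial := by
    haveI : Fintype (MulAction.orbit (Equiv.Perm (Fin p)) a) := Fintype.ofFinite _
    have hos := MulAction.card_orbit_mul_card_stabilizer_eq_card_group (Equiv.Perm (Fin p)) a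
    have hto : Fintype.card (MulAction.orbit (Equiv.Perm (Fin p)) a) = p := by
      rw [← Nat.card_eq_fintype_card, Nat.card_congr (Equiv.setCongr horb),
        Nat.card_congr (Equiv.Set.univ (Fin p))]
      simp
    rw [hto, ← Nat.card_eq_fintype_card (α := Equiv.Perm (Fin p)),
      ← Nat.card_eq_fintype_card, hG] at hos
    exact Nat.eq_of_mul_eq_mul_left hp0 (by rw [hos, hfac])
  -- card R = p * card N
  have hqR : Nat.card R = p * Nat.card N := by
    have h1 := Subgroup.card_eq_card_quotient_mul_card_subgroup (N.subgroupOf R)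
    have h2 : Nat.card (N.subgroupOf R) = Nat.card N :=
      Nat.card_congr (Subgroup.subgroupOfEquivOfLe hNR).toEquiv
    rw [hcard, h2] at h1
    exact h1
  -- (p-1)! divides card N
  have hdvdN : (p - 1).factorial ∣ Nat.card N := by
    rw [← hstabcard]; exact Subgroup.card_dvd_of_le hUN
  have hdvdR : Nat.card R ∣ p.factorial := by
    rw [← hG]; exact Subgroup.card_subgroup_dvd_card R
  have hRfac : Nat.card R = p.factorial := by
    refine Nat.dvd_antisymm hdvdR ?_
    rw [← hfac, hqR]
    exact Nat.mul_dvd_mul_left p hdvdN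
  have hRtop : R = ⊤ :=
    Subgroup.eq_top_of_card_eq R (by rw [hRfac, hG])
  have hNcard : Nat.card N = (p - 1).factorial := by
    have := hRfac
    rw [hqR, ← hfac] at this
    exact Nat.eq_of_mul_eq_mul_left hp0 this
  have hNstab : stab = N :=
    Subgroup.eq_of_le_of_card_ge hUN (by rw [hNcard, hstabcard])
  -- now derive contradiction from normality: conjugate swap b c by swap a b
  have h2p : 2 ≤ p := by omega
  set b : Fin p := ⟨0, by omega⟩ with hb
  set c : Fin p := ⟨1, by omega⟩ with hc
  have hab : a ≠ b := by simp [ha, hb, Fin.ext_iff]; omega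
  have hac : a ≠ c := by simp [ha, hc, Fin.ext_iff]; omega
  have hbc : b ≠ c := by simp [hb, hc, Fin.ext_iff]
  have hτ : Equiv.swap b c ∈ N := by
    rw [← hNstab]
    simp only [hstab, MulAction.mem_stabilizer_iff, Equiv.Perm.smul_def]
    exact Equiv.swap_apply_of_ne_of_ne hab hac
  have hτR : Equiv.swap b c ∈ R := hNR hτ
  have hσR : Equiv.swap a b ∈ R := by rw [hRtop]; trivial
  have hτ' : (⟨Equiv.swap b c, hτR⟩ : R) ∈ N.subgroupOf R := by
    rw [Subgroup.mem_subgroupOf]; exact hτ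
  have hconj := hn.conj_mem _ hτ' ⟨Equiv.swap a b, hσR⟩
  rw [Subgroup.mem_subgroupOf] at hconj
  have hconj' : Equiv.swap a b * Equiv.swap b c * (Equiv.swap a b)⁻¹ ∈ stab := by
    rw [hNstab]; exact hconj
  rw [hstab, MulAction.mem_stabilizer_iff, Equiv.Perm.smul_def] at hconj'
  simp only [Equiv.swap_inv, Equiv.Perm.mul_apply, Equiv.swap_apply_left] at hconj'
  rw [Equiv.swap_apply_of_ne_of_ne (Ne.symm hac) (Ne.symm hbc)] at hconj'
  exact hac hconj'.symm
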